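/- Let $p$ be a prime, and let $p_1,\ldots,p_n$ be integers not divisible by $p$, and let $N$ be a natural number. Then there exist integers $R_1,\ldots,R_{n+1}$ such that $p_1^{R_1}p_2^{R_2}\cdots p_n^{R_n} \equiv 1 \pmod p$ and $p_1^{R_2}p_2^{R_3}\cdots p_n^{R_{n+1}} \equiv p_1^N \pmod p$. -/

import Mathlib

open Finset

private lemma sum_two_point (k j : ℕ) (α : ℕ → ℤ) (x y : ℤ) (hj : j < k+1) :
    ∑ i ∈ range (k+1), α i * (if i = j then x else if i = j+1 then y else 0)
      = α j * x + (if j+1 < k+1 then α (j+1) * y else 0) := by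
  have h1 : ∀ i ∈ range (k+1), α i * (if i = j then x else if i = j+1 then y else 0)
      = (if i = j then α i * x else 0) + (if i = j+1 then α i * y else 0) := by
    intro i _
    by_cases hij : i = j
    · have : ¬ (i = j + 1) := by omega
      simp [hij, this]
    · by_cases hij1 : i = j + 1 <;> simp [hij, hij1]
  rw [Finset.sum_congr rfl h1, Finset.sum_add_distrib,
      Finset.sum_ite_eq' (range (k+1)) j, Finset.sum_ite_eq' (range (k+1)) (j+1)]
  simp [Finset.mem_range, hj]

private lemma core (k : ℕ) : ∀ (m : ℕ), 0 < m → ∀ (α : ℕ → ℤ) (N : ℤ),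
    ∃ R : ℕ → ℤ, ((m:ℤ) ∣ ∑ i ∈ range (k+1), α i * R i) ∧
      ((m:ℤ) ∣ (∑ i ∈ range (k+1), α i * R (i+1)) - N * α 0) := by
  intro m
  induction m using Nat.strong_induction_on with
  | _ m IH =>
    intro hm α N
    rcases Nat.lt_or_ge m 2 with h2 | h2
    · have hm1 : m = 1 := by omega
      subst hm1
      exact ⟨fun _ => 0, by simp, by simp⟩
    -- now m ≥ 2
    have hm0 : m ≠ 0 := by omega
    have hqp : Nat.Prime m.minFac := Nat.minFac_prime (by omega)
    set q := m.minFac with hqdef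
    have hqm : q ∣ m := m.minFac_dvd
    set e := m.factorization q with hedef
    set m1 := q ^ e with hm1def
    set m2 := m / m1 with hm2def
    have hsplit : m1 * m2 = m := Nat.ordProj_mul_ordCompl_eq_self m q
    have hepos : 0 < e := hqp.factorization_pos_of_dvd hm0 hqm
    have hm1big : 2 ≤ m1 := by
      calc 2 ≤ q := hqp.two_le
      _ = q ^ 1 := (pow_one q).symm
      _ ≤ q ^ e := Nat.pow_le_pow_right hqp.pos hepos
    have hm2pos : 0 < m2 := Nat.ordCompl_pos q hm0
    by_cases hm2 : m2 = 1
    case neg =>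
      -- CRT case : m = m1 * m2 with coprime factors both > 1
      have hm2ge : 2 ≤ m2 := by omega
      have hm1lt : m1 < m := by nlinarith [hsplit]
      have hm2lt : m2 < m := by nlinarith [hsplit]
      obtain ⟨R1, h11, h12⟩ := IH m1 hm1lt (by omega) α N
      obtain ⟨R2, h21, h22⟩ := IH m2 hm2lt hm2pos α N
      have hco : IsCoprime (m1:ℤ) (m2:ℤ) := by
        rw [Int.isCoprime_iff_gcd_eq_one, Int.gcd_natCast_natCast]
        exact Nat.Coprime.pow_left e (Nat.coprime_ordCompl hqp hm0)
      obtain ⟨u, v, huv⟩ := hco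
      refine ⟨fun i => v * m2 * R1 i + u * m1 * R2 i, ?_, ?_⟩
      · obtain ⟨t1, ht1⟩ := h11
        obtain ⟨t2, ht2⟩ := h21
        refine ⟨v * t1 + u * t2, ?_⟩
        have hL : ∑ i ∈ range (k+1), α i * (v * m2 * R1 i + u * m1 * R2 i)
            = v * m2 * (∑ i ∈ range (k+1), α i * R1 i)
              + u * m1 * (∑ i ∈ range (k+1), α i * R2 i) := by
          rw [Finset.mul_sum, Finset.mul_sum, ← Finset.sum_add_distrib]
          exact Finset.sum_congr rfl fun i _ => by ring
        rw [hL, ht1, ht2, ← hsplit]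
        push_cast
        ring
      · obtain ⟨w1, hw1⟩ := h12
        obtain ⟨w2, hw2⟩ := h22
        refine ⟨v * w1 + u * w2, ?_⟩
        have hL : ∑ i ∈ range (k+1), α i * (v * m2 * R1 (i+1) + u * m1 * R2 (i+1))
            = v * m2 * (∑ i ∈ range (k+1), α i * R1 (i+1))
              + u * m1 * (∑ i ∈ range (k+1), α i * R2 (i+1)) := by
          rw [Finset.mul_sum, Finset.mul_sum, ← Finset.sum_add_distrib]
          exact Finset.sum_congr rfl fun i _ => by ring
        rw [hL, ← hsplit]
        push_cast
        linear_combination (v * (m2:ℤ)) * hw1 + (u * (m1:ℤ)) * hw2 + (N * α 0) * huv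
    case pos =>
      -- prime power case : m = q ^ e
      have hmqe : m = m1 := by
        have h' := hsplit
        rw [hm2, mul_one] at h'
        exact h'.symm
      by_cases hall : ∀ i, i < k + 1 → (q:ℤ) ∣ α i
      · -- all α divisible by q : divide through by q
        set m' := m / q with hm'def
        have hmm : q * m' = m := Nat.mul_div_cancel' hqm
        have hm'pos : 0 < m' := Nat.div_pos (Nat.minFac_le hm) hqp.pos
        have hm'lt : m' < m := Nat.div_lt_self hm hqp.one_lt
        obtain ⟨R, hR1, hR2⟩ := IH m' hm'lt hm'pos (fun i => α i / q) N
        refine ⟨R, ?_, ?_⟩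
        · obtain ⟨t, ht⟩ := hR1
          refine ⟨t, ?_⟩
          have hL : ∑ i ∈ range (k+1), α i * R i
              = (q:ℤ) * ∑ i ∈ range (k+1), (α i / q) * R i := by
            rw [Finset.mul_sum]
            refine Finset.sum_congr rfl fun i hi => ?_
            have hd := Int.ediv_mul_cancel (hall i (Finset.mem_range.mp hi))
            calc α i * R i = (α i / q * q) * R i := by rw [hd]
            _ = (q:ℤ) * (α i / q * R i) := by ring
          rw [hL, ht, ← hmm]
          push_cast
          ring
        · obtain ⟨t, ht⟩ := hR2
          refine ⟨t, ?_⟩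
          have hL : ∑ i ∈ range (k+1), α i * R (i+1)
              = (q:ℤ) * ∑ i ∈ range (k+1), (α i / q) * R (i+1) := by
            rw [Finset.mul_sum]
            refine Finset.sum_congr rfl fun i hi => ?_
            have hd := Int.ediv_mul_cancel (hall i (Finset.mem_range.mp hi))
            calc α i * R (i+1) = (α i / q * q) * R (i+1) := by rw [hd]
            _ = (q:ℤ) * (α i / q * R (i+1)) := by ring
          have hd0 := Int.ediv_mul_cancel (hall 0 (by omega))
          have hα0 : N * α 0 = (q:ℤ) * (N * (α 0 / q)) := by
            calc N * α 0 = N * (α 0 / q * q) := by rw [hd0]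
            _ = (q:ℤ) * (N * (α 0 / q)) := by ring
          rw [hL, hα0, ← hmm]
          push_cast
          linear_combination (q:ℤ) * ht
      · -- some α j not divisible by q : Cramer / invertible 2x2 step
        push_neg at hall
        have hex : ∃ i, i < k + 1 ∧ ¬ (q:ℤ) ∣ α i := hall
        classical
        have hex2 : ∃ j, (j < k + 1 ∧ ¬ (q:ℤ) ∣ α j) ∧ ∀ i, i < j → (q:ℤ) ∣ α i := by
          refine ⟨Nat.find hex, Nat.find_spec hex, ?_⟩
          intro i hij
          by_contra hnd
          have hik : i < k + 1 := by
            have := (Nat.find_spec hex).1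
            omega
          exact Nat.find_min hex hij ⟨hik, hnd⟩
        obtain ⟨j, ⟨hjlt, hjnd⟩, hmin⟩ := hex2
        obtain ⟨A, hA⟩ : ∃ A, A = α j := ⟨_, rfl⟩
        obtain ⟨B, hB⟩ : ∃ B, B = if j + 1 < k + 1 then α (j+1) else 0 := ⟨_, rfl⟩
        obtain ⟨C, hC⟩ : ∃ C, C = if j = 0 then 0 else α (j-1) := ⟨_, rfl⟩
        have hqC : (q:ℤ) ∣ C := by
          rw [hC]
          split
          · exact dvd_zero _
          · exact hmin (j-1) (by omega)
        obtain ⟨d, hd⟩ : ∃ d, d = A * A - C * B := ⟨_, rfl⟩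
        have hqd : ¬ (q:ℤ) ∣ d := by
          intro hdvd
          have hAA : (q:ℤ) ∣ A * A := by
            have h' : A * A = d + C * B := by rw [hd]; ring
            rw [h']
            exact dvd_add hdvd (Dvd.dvd.mul_right hqC B)
          have hqA : (q:ℤ) ∣ A := by
            rcases (Nat.prime_iff_prime_int.mp hqp).dvd_mul.mp hAA with h | h <;> exact h
          rw [hA] at hqA
          exact hjnd hqA
        have hcop : IsCoprime d ((m:ℤ)) := by
          rw [Int.isCoprime_iff_gcd_eq_one]
          have h1 : Nat.Coprime q d.natAbs := by
            refine (Nat.Prime.coprime_iff_not_dvd hqp).mpr ?_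
            intro hdq
            exact hqd (Int.natAbs_dvd_natAbs.mp (by simpa using hdq))
          have h2 : Nat.Coprime d.natAbs m := by
            rw [hmqe, hm1def]
            exact Nat.Coprime.pow_right e (Nat.coprime_comm.mp h1)
          simpa [Int.gcd] using h2
        obtain ⟨d', c, hdc⟩ := hcop
        rw [hd] at hdc
        obtain ⟨γ, hγ⟩ : ∃ γ, γ = N * α 0 := ⟨_, rfl⟩
        obtain ⟨x, hx⟩ : ∃ x, x = -(d' * B * γ) := ⟨_, rfl⟩
        obtain ⟨y, hy⟩ : ∃ y, y = d' * A * γ := ⟨_, rfl⟩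
        refine ⟨fun l => if l = j then x else if l = j+1 then y else 0, ?_, ?_⟩
        · rw [sum_two_point k j α x y hjlt]
          have hBy : (if j+1 < k+1 then α (j+1) * y else 0) = B * y := by
            rw [hB]; split_ifs <;> ring
          refine ⟨0, ?_⟩
          rw [hBy, ← hA, hx, hy]
          ring
        · -- second condition
          have hS' : ∑ i ∈ range (k+1),
              α i * (if i + 1 = j then x else if i + 1 = j+1 then y else 0)
              = C * x + A * y := by
            by_cases hj0 : j = 0
            · subst hj0
              have hpt : ∀ i ∈ range (k+1),
                  α i * (if i + 1 = 0 then x else if i + 1 = 0+1 then y else 0)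
                  = if i = 0 then α i * y else 0 := by
                intro i _
                by_cases h : i = 0 <;> simp [h]
              rw [Finset.sum_congr rfl hpt, Finset.sum_ite_eq' (range (k+1)) 0]
              rw [if_pos (Finset.mem_range.mpr (by omega))]
              have hC0 : C = 0 := by rw [hC]; simp
              rw [hC0, ← hA]
              ring
            · obtain ⟨j', rfl⟩ : ∃ j', j = j' + 1 := ⟨j - 1, by omega⟩
              have hpt : ∀ i ∈ range (k+1),
                  α i * (if i + 1 = j'+1 then x else if i + 1 = (j'+1)+1 then y else 0)
                  = (if i = j' then α i * x else 0) + (if i = j'+1 then α i * y else 0) := by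
                intro i _
                by_cases h : i = j'
                · have h2 : ¬ (i = j' + 1) := by omega
                  have h3 : i + 1 = j' + 1 := by omega
                  have h4 : ¬ (i + 1 = j' + 1 + 1) := by omega
                  simp [h, h2, h3, h4]
                · by_cases h5 : i = j' + 1
                  · have h6 : ¬ (i + 1 = j' + 1) := by omega
                    have h7 : i + 1 = j' + 1 + 1 := by omega
                    simp [h, h5, h6, h7]
                  · have h6 : ¬ (i + 1 = j' + 1) := by omega
                    have h7 : ¬ (i + 1 = j' + 1 + 1) := by omega
                    simp [h, h5, h6, h7]
              rw [Finset.sum_congr rfl hpt, Finset.sum_add_distrib,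
                  Finset.sum_ite_eq' (range (k+1)) j', Finset.sum_ite_eq' (range (k+1)) (j'+1)]
              rw [if_pos (Finset.mem_range.mpr (by omega)), if_pos (Finset.mem_range.mpr hjlt)]
              have hC' : C = α j' := by rw [hC]; simp
              rw [hC', ← hA]
          rw [hS']
          refine ⟨-(c * γ), ?_⟩
          rw [hx, hy, hγ]
          linear_combination (N * α 0) * hdc

private lemma zpow_sum' {G : Type*} [CommGroup G] {ι : Type*} (g : G) (s : Finset ι) (f : ι → ℤ) :
    g ^ (∑ i ∈ s, f i) = ∏ i ∈ s, g ^ f i := by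
  classical
  induction s using Finset.induction_on with
  | empty => simp
  | insert a s' h ih => rw [Finset.sum_insert h, Finset.prod_insert h, zpow_add, ih]

/-- Let `p` be prime and `a 0, …, a (n+1)` integers not divisible by `p`
(a family of size `n+2 ≥ 2`), `N : ℕ`. Then there are integers `R_0, …, R_{n+2}` with
`∏ aᵢ ^ R_i ≡ 1 (mod p)` and `∏ aᵢ ^ R_{i+1} ≡ a₀ ^ N (mod p)`, exponentiation taken
in `(ℤ/p)ˣ` (i.e. with `zpow` in the field `ZMod p`). -/
theorem exists_multiplicative_solution (n : ℕ) (p : ℕ) [Fact p.Prime]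
    (a : Fin (n + 2) → ℤ) (ha : ∀ i, ¬ ((p : ℤ) ∣ a i)) (N : ℕ) :
    ∃ R : Fin (n + 3) → ℤ,
      (∏ i : Fin (n + 2), ((a i : ZMod p)) ^ (R i.castSucc)) = 1 ∧
      (∏ i : Fin (n + 2), ((a i : ZMod p)) ^ (R i.succ)) = ((a 0 : ZMod p)) ^ (N : ℤ) := by
  classical
  have hne : ∀ i, (a i : ZMod p) ≠ 0 := by
    intro i h
    exact ha i ((ZMod.intCast_zmod_eq_zero_iff_dvd _ _).mp h)
  set u : Fin (n+2) → (ZMod p)ˣ := fun i => Units.mk0 _ (hne i) with hu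
  obtain ⟨g, hg⟩ := IsCyclic.exists_generator (α := (ZMod p)ˣ)
  have hαex : ∀ i, ∃ z : ℤ, g ^ z = u i := fun i => Subgroup.mem_zpowers_iff.mp (hg (u i))
  choose α hαs using hαex
  set m := orderOf g with hmdef
  have hm : 0 < m := orderOf_pos g
  have key : ∀ (f : Fin (n+2) → ℤ), ∏ i, (a i : ZMod p) ^ (f i)
      = ((g ^ (∑ i, α i * f i) : (ZMod p)ˣ) : ZMod p) := by
    intro f
    have h1 : ∀ i : Fin (n+2), (a i : ZMod p) ^ (f i) = ((u i ^ f i : (ZMod p)ˣ) : ZMod p) := by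
      intro i
      rw [Units.val_zpow_eq_zpow_val, hu, Units.val_mk0]
    calc ∏ i, (a i : ZMod p) ^ (f i) = ∏ i, ((u i ^ f i : (ZMod p)ˣ) : ZMod p) :=
          Finset.prod_congr rfl (fun i _ => h1 i)
    _ = ((∏ i, u i ^ f i : (ZMod p)ˣ) : ZMod p) := by
          exact (map_prod (Units.coeHom (ZMod p)) _ _).symm
    _ = ((g ^ (∑ i, α i * f i) : (ZMod p)ˣ) : ZMod p) := by
          congr 1
          calc ∏ i, u i ^ f i = ∏ i, g ^ (α i * f i) := by
                refine Finset.prod_congr rfl fun i _ => ?_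
                rw [← hαs i, ← zpow_mul]
          _ = g ^ (∑ i, α i * f i) := (zpow_sum' g Finset.univ _).symm
  set αe : ℕ → ℤ := fun i => if h : i < n+2 then α ⟨i, h⟩ else 0 with hαe
  obtain ⟨R, hR1, hR2⟩ := core (n+1) m hm αe (N : ℤ)
  have htrans : ∀ (S : ℕ → ℤ), ∑ i : Fin (n+2), α i * S i.val = ∑ i ∈ range (n+2), αe i * S i := by
    intro S
    rw [← Fin.sum_univ_eq_sum_range (fun i => αe i * S i) (n+2)]
    refine Finset.sum_congr rfl fun i _ => ?_
    have : αe i.val = α i := by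
      rw [hαe]
      simp [i.isLt]
    rw [this]
  refine ⟨fun l => R l.val, ?_, ?_⟩
  · rw [key (fun i => R i.castSucc.val)]
    have h1 : ∑ i : Fin (n+2), α i * R i.castSucc.val = ∑ i ∈ range (n+2), αe i * R i := by
      have := htrans R
      simpa using this
    rw [h1]
    obtain ⟨t, ht⟩ := hR1
    rw [ht, zpow_mul, zpow_natCast, pow_orderOf_eq_one, one_zpow, Units.val_one]
  · rw [key (fun i => R i.succ.val)]
    have h2 : ∑ i : Fin (n+2), α i * R i.succ.val = ∑ i ∈ range (n+2), αe i * R (i+1) := by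
      have := htrans (fun i => R (i+1))
      simpa [Fin.val_succ] using this
    rw [h2]
    obtain ⟨t, ht⟩ := hR2
    have hsum : ∑ i ∈ range (n+2), αe i * R (i+1) = (N:ℤ) * αe 0 + (m:ℤ) * t := by
      linarith [ht]
    have hαe0 : αe 0 = α 0 := by rw [hαe]; simp
    rw [hsum, hαe0, zpow_add]
    have hone : g ^ ((m:ℤ) * t) = 1 := by
      rw [zpow_mul, zpow_natCast, pow_orderOf_eq_one, one_zpow]
    have hNα : g ^ ((N:ℤ) * α 0) = u 0 ^ (N:ℤ) := by
      rw [mul_comm, zpow_mul, hαs 0]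
    rw [hone, hNα, mul_one, Units.val_zpow_eq_zpow_val, hu, Units.val_mk0]
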